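/- Let f : ℝ^n → ℝ^n be C¹, x₀ a T-periodic solution of ẋ = f(x), and z* a T-periodic solution of ż = -(f'(x₀(t)))ᵀ z with ⟨z*(t), x₀'(t)⟩ = 1 for all t. For the perturbation γ_δ(t,x) = (|x - y₀(t)|² - m - δ) f(x), where m is a constant and y₀ is continuous and T-periodic, the Malkin bifurcation function F_δ(θ) = ∫_0^T ⟨z*(τ), γ_δ(τ - θ, x₀(τ))⟩ dτ equals ∫_0^T |x₀(τ) - y₀(τ - θ)|² dτ - T m - T δ, which after the substitution τ ↦ τ + θ equals ∫_0^T |x₀(τ + θ) - y₀(τ)|² dτ - T m - T δ. -/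

import Mathlib

/-- computation of the Malkin bifurcation function for the
perturbation γ_δ(t,x) = (|x - y₀(t)|² - m - δ) f(x): using x₀' = f(x₀), the
normalization ⟨z*(τ), f(x₀(τ))⟩ = 1 and T-periodicity,
F_δ(θ) = ∫₀ᵀ ⟨z*(τ), γ_δ(τ-θ, x₀(τ))⟩ dτ
       = ∫₀ᵀ |x₀(τ) - y₀(τ-θ)|² dτ - Tm - Tδ
       = ∫₀ᵀ |x₀(τ+θ) - y₀(τ)|² dτ - Tm - Tδ. -/
theorem stmt18 (n : ℕ) (T : ℝ) (hT : 0 < T)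
    (f : EuclideanSpace ℝ (Fin n) → EuclideanSpace ℝ (Fin n))
    (hf : ContDiff ℝ 1 f)
    (x₀ zstar y₀ : ℝ → EuclideanSpace ℝ (Fin n))
    (hx : ∀ t : ℝ, HasDerivAt x₀ (f (x₀ t)) t)
    (hz : Continuous zstar) (hy : Continuous y₀)
    (hxper : ∀ t : ℝ, x₀ (t + T) = x₀ t)
    (hzper : ∀ t : ℝ, zstar (t + T) = zstar t)
    (hyper : ∀ t : ℝ, y₀ (t + T) = y₀ t)
    (hnorm : ∀ t : ℝ, (inner ℝ (zstar t) (f (x₀ t)) : ℝ) = 1)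
    (m δ : ℝ) (hδ : 0 ≤ δ) (θ : ℝ) :
    (∫ τ in (0:ℝ)..T,
        (inner ℝ (zstar τ) ((‖x₀ τ - y₀ (τ - θ)‖ ^ 2 - m - δ) • f (x₀ τ)) : ℝ)) =
      (∫ τ in (0:ℝ)..T, ‖x₀ τ - y₀ (τ - θ)‖ ^ 2) - T * m - T * δ ∧
    (∫ τ in (0:ℝ)..T, ‖x₀ τ - y₀ (τ - θ)‖ ^ 2) =
      ∫ τ in (0:ℝ)..T, ‖x₀ (τ + θ) - y₀ τ‖ ^ 2 := by
  have hxc : Continuous x₀ := by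
    apply continuous_iff_continuousAt.2
    exact fun t => (hx t).continuousAt
  have hg : Continuous (fun τ : ℝ => ‖x₀ τ - y₀ (τ - θ)‖ ^ 2) := by
    exact ((hxc.sub (hy.comp (continuous_id.sub continuous_const))).norm.pow 2)
  constructor
  · have h1 : ∀ τ : ℝ,
        (inner ℝ (zstar τ) ((‖x₀ τ - y₀ (τ - θ)‖ ^ 2 - m - δ) • f (x₀ τ)) : ℝ)
          = ‖x₀ τ - y₀ (τ - θ)‖ ^ 2 - m - δ := by
      intro τ
      rw [real_inner_smul_right, hnorm τ, mul_one]
    rw [intervalIntegral.integral_congr (g := fun τ => ‖x₀ τ - y₀ (τ - θ)‖ ^ 2 - m - δ)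
      (fun τ _ => h1 τ)]
    rw [intervalIntegral.integral_sub ((hg.intervalIntegrable 0 T).sub
        (intervalIntegrable_const)) intervalIntegrable_const,
      intervalIntegral.integral_sub (hg.intervalIntegrable 0 T)
        intervalIntegrable_const,
      intervalIntegral.integral_const, intervalIntegral.integral_const]
    simp [smul_eq_mul]
  · have hper : Function.Periodic (fun τ : ℝ => ‖x₀ (τ + θ) - y₀ τ‖ ^ 2) T := by
      intro t
      simp only []
      rw [show t + T + θ = (t + θ) + T by ring, hxper, hyper]
    have := intervalIntegral.integral_comp_sub_right
      (f := fun τ : ℝ => ‖x₀ (τ + θ) - y₀ τ‖ ^ 2) (a := 0) (b := T) θ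
    simp only [sub_add_cancel] at this
    rw [this]
    have h2 := hper.intervalIntegral_add_eq (-θ) 0
    rw [zero_add] at h2
    rw [show (0:ℝ) - θ = -θ by ring, show T - θ = -θ + T by ring, h2]
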